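/- Let g ≥ 2 and let V = (Fin g → ZMod 2). Suppose c₁, …, c_{g−1} ∈ V all lie in the kernel of w₁ and span the kernel of w₁ as a ZMod 2-subspace. Then there exists a ℤ₄-quadratic form q on V such that q(cᵢ) = 2 for all i and q ∘ τ_{cᵢ} = q for all i = 1, …, g−1. -/

import Mathlib

/-- The mod-2 intersection form on `Fin g → ZMod 2` (dot product). -/
def B {g : ℕ} (x y : Fin g → ZMod 2) : ZMod 2 := ∑ i, x i * y i

/-- The first Stiefel–Whitney class `w₁(x) = ∑ i, x i` as a linear map. -/
def w₁ (g : ℕ) : (Fin g → ZMod 2) →ₗ[ZMod 2] ZMod 2 where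
  toFun x := ∑ i, x i
  map_add' x y := by simp [Finset.sum_add_distrib]
  map_smul' c x := by simp [Finset.mul_sum]

/-- The doubling map `ZMod 2 → ZMod 4`, sending 0 ↦ 0 and 1 ↦ 2. -/
def ι : ZMod 2 → ZMod 4 := fun a => 2 * (a.val : ZMod 4)

/-- A ℤ₄-quadratic form on `Fin g → ZMod 2`. -/
def IsZ4Quad {g : ℕ} (q : (Fin g → ZMod 2) → ZMod 4) : Prop :=
  ∀ x y, q (x + y) = q x + q y + ι (B x y)

/-- The transvection associated to `c` : `τ_c(x) = x + B(x,c) • c`. -/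
def τ {g : ℕ} (c : Fin g → ZMod 2) : (Fin g → ZMod 2) → (Fin g → ZMod 2) :=
  fun x => x + B x c • c

/-- `ι` as an additive monoid hom. -/
def ιhom : ZMod 2 →+ ZMod 4 where
  toFun := ι
  map_zero' := by decide
  map_add' := by decide

lemma pw (a b : ZMod 2) :
    -((((a + b).val : ℕ)) : ZMod 4)
      = -(((a.val : ℕ)) : ZMod 4) + (-(((b.val : ℕ)) : ZMod 4) + ι (a * b)) := by
  revert a b; decide

theorem stmt_8 (g : ℕ) (hg : 2 ≤ g)
    (c : Fin (g - 1) → (Fin g → ZMod 2))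
    (hker : ∀ i, w₁ g (c i) = 0)
    (hspan : Submodule.span (ZMod 2) (Set.range c) = LinearMap.ker (w₁ g)) :
    ∃ q : (Fin g → ZMod 2) → ZMod 4, IsZ4Quad q ∧
      (∀ i, q (c i) = 2) ∧ (∀ i, q ∘ τ (c i) = q) := by
  classical
  set K := LinearMap.ker (w₁ g) with hK
  set c' : Fin (g - 1) → K := fun i => ⟨c i, hker i⟩ with hc'
  -- w₁ is surjective
  have hsurj : Function.Surjective (w₁ g) := by
    intro a
    refine ⟨Pi.single ⟨0, by omega⟩ a, ?_⟩
    show ∑ i, Pi.single (⟨0, by omega⟩ : Fin g) a i = a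
    simp
  -- finrank of K is g - 1
  have hrank : Module.finrank (ZMod 2) K = g - 1 := by
    have h1 := LinearMap.finrank_range_add_finrank_ker (w₁ g)
    rw [LinearMap.range_eq_top.mpr hsurj, finrank_top, Module.finrank_self,
      Module.finrank_pi, Fintype.card_fin] at h1
    have h2 : 1 + Module.finrank (ZMod 2) K = g := h1
    omega
  -- span of c' is top
  have hspan' : ⊤ ≤ Submodule.span (ZMod 2) (Set.range c') := by
    have hinj := Submodule.injective_subtype K
    have himg : K.subtype '' Set.range c' = Set.range c := by
      ext v
      constructor
      · rintro ⟨w, ⟨i, rfl⟩, rfl⟩; exact ⟨i, rfl⟩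
      · rintro ⟨i, rfl⟩; exact ⟨c' i, ⟨i, rfl⟩, rfl⟩
    have hmap : Submodule.map K.subtype (Submodule.span (ZMod 2) (Set.range c'))
        = Submodule.map K.subtype ⊤ := by
      rw [Submodule.map_span, Submodule.map_subtype_top, himg, hspan]
    exact ge_of_eq (Submodule.map_injective_of_injective hinj hmap)
  have hcard : Fintype.card (Fin (g - 1)) = Module.finrank (ZMod 2) K := by
    simp [hrank]
  let b : Module.Basis (Fin (g - 1)) (ZMod 2) K :=
    basisOfTopLeSpanOfCardEqFinrank c' hspan' hcard
  have hb : ∀ i, b i = c' i := fun i => by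
    rw [coe_basisOfTopLeSpanOfCardEqFinrank]
  -- the parity data
  set N : Fin (g - 1) → ℕ := fun i => ∑ j, (c i j).val with hN
  have hNeven : ∀ i, 2 ∣ N i := by
    intro i
    rw [← ZMod.natCast_eq_zero_iff]
    have h2 : ((N i : ℕ) : ZMod 2) = ∑ j, (((c i j).val : ℕ) : ZMod 2) := by
      rw [hN]; push_cast; ring
    rw [h2]
    have h3 : ∀ j, (((c i j).val : ℕ) : ZMod 2) = c i j := fun j => by
      rw [ZMod.natCast_val, ZMod.cast_id]
    calc (∑ j, (((c i j).val : ℕ) : ZMod 2)) = ∑ j, c i j :=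
          Finset.sum_congr rfl fun j _ => h3 j
      _ = 0 := hker i
  have hN4 : ∀ i, ((N i : ℕ) : ZMod 4) = 0 ∨ ((N i : ℕ) : ZMod 4) = 2 := by
    intro i
    obtain ⟨k, hk⟩ := hNeven i
    rw [hk]
    push_cast
    have : ∀ m : ZMod 4, 2 * m = 0 ∨ 2 * m = 2 := by decide
    exact this _
  -- target values for the linear functional
  set t : Fin (g - 1) → ZMod 2 := fun i => if ((N i : ℕ) : ZMod 4) = 0 then 1 else 0 with ht
  let ℓ₀ : K →ₗ[ZMod 2] ZMod 2 := b.constr (ZMod 2) t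
  obtain ⟨ℓ, hℓ⟩ := LinearMap.exists_extend ℓ₀
  have hℓc : ∀ i, ℓ (c i) = t i := by
    intro i
    have h1 : ℓ (K.subtype (c' i)) = ℓ₀ (c' i) := by rw [← LinearMap.comp_apply, hℓ]
    rw [show K.subtype (c' i) = c i from rfl] at h1
    rw [h1, show ℓ₀ = b.constr (ZMod 2) t from rfl, ← hb i, Module.Basis.constr_basis]
  -- the quadratic form
  set q : (Fin g → ZMod 2) → ZMod 4 :=
    fun x => (∑ j, -((((x j).val : ℕ)) : ZMod 4)) + ι (ℓ x) with hqdef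
  have hq : IsZ4Quad q := by
    intro u v
    have hsum : ∑ j, -(((((u + v) j).val : ℕ)) : ZMod 4)
        = (∑ j, -((((u j).val : ℕ)) : ZMod 4)) +
          ((∑ j, -((((v j).val : ℕ)) : ZMod 4)) + ∑ j, ι (u j * v j)) := by
      rw [← Finset.sum_add_distrib, ← Finset.sum_add_distrib]
      exact Finset.sum_congr rfl fun j _ => pw (u j) (v j)
    have hι : ι (B u v) = ∑ j, ι (u j * v j) := by
      show ιhom (B u v) = ∑ j, ιhom (u j * v j)
      rw [B, map_sum]
    show (∑ j, -(((((u + v) j).val : ℕ)) : ZMod 4)) + ι (ℓ (u + v))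
      = ((∑ j, -((((u j).val : ℕ)) : ZMod 4)) + ι (ℓ u))
      + ((∑ j, -((((v j).val : ℕ)) : ZMod 4)) + ι (ℓ v)) + ι (B u v)
    rw [map_add ℓ, show ι (ℓ u + ℓ v) = ι (ℓ u) + ι (ℓ v) from ιhom.map_add _ _,
      hsum, hι]
    ring
  have hqc : ∀ i, q (c i) = 2 := by
    intro i
    show (∑ j, -((((c i j).val : ℕ)) : ZMod 4)) + ι (ℓ (c i)) = 2
    rw [hℓc i]
    have h1 : (∑ j, -((((c i j).val : ℕ)) : ZMod 4)) = -((N i : ℕ) : ZMod 4) := by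
      show _ = -(((∑ j, (c i j).val : ℕ)) : ZMod 4)
      push_cast
      exact Finset.sum_neg_distrib _
    rw [h1]
    rcases hN4 i with h | h
    · have htv : t i = 1 := by
        show (if ((N i : ℕ) : ZMod 4) = 0 then (1 : ZMod 2) else 0) = 1
        rw [if_pos h]
      rw [h, htv]
      decide
    · have htv : t i = 0 := by
        show (if ((N i : ℕ) : ZMod 4) = 0 then (1 : ZMod 2) else 0) = 0
        rw [if_neg (by rw [h]; decide)]
      rw [h, htv]
      decide
  refine ⟨q, hq, hqc, ?_⟩
  intro i
  funext x
  simp only [Function.comp_apply, τ]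
  rcases (by decide : ∀ a : ZMod 2, a = 0 ∨ a = 1) (B x (c i)) with h | h
  · rw [h, zero_smul, add_zero]
  · rw [h, one_smul, hq x (c i), hqc i, h]
    rw [show ι (1 : ZMod 2) = 2 from by decide, add_assoc,
      show (2 : ZMod 4) + 2 = 0 from by decide, add_zero]
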